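/- Let p_1 < p_2 < ... < p_k be the first k primes, let m ≥ 1, n = km, and define A ∈ Z^{m×n} by A_{ij} = (p_1 p_2 ··· p_k)/p_r if j = (i-1)k + r for some 1 ≤ r ≤ k, and A_{ij} = 0 otherwise. Let b = A·1 (the sum of all columns). Then every integer solution x of Ax = b has all n entries nonzero. -/

import Mathlib

/-- The block matrix `A ∈ ℤ^{m × km}` (columns indexed by pairs `(i, r)`) with
`A_{i,(i,r)} = (p₁ p₂ ⋯ p_k) / p_{r+1}` and zeros elsewhere, where `p` ranges over
the primes (`Nat.nth Nat.Prime s` is the `(s+1)`-st prime). -/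
noncomputable def blockA (m k : ℕ) : Matrix (Fin m) (Fin m × Fin k) ℤ :=
  Matrix.of fun i jr =>
    if jr.1 = i then
      (((∏ s ∈ Finset.range k, Nat.nth Nat.Prime s) / Nat.nth Nat.Prime jr.2.1 : ℕ) : ℤ)
    else 0

lemma div_eq_prod_erase {k : ℕ} (r : Fin k) :
    (∏ s ∈ Finset.range k, Nat.nth Nat.Prime s) / Nat.nth Nat.Prime r
      = ∏ s ∈ (Finset.range k).erase (r : ℕ), Nat.nth Nat.Prime s := by
  rw [← Finset.mul_prod_erase _ _ (Finset.mem_range.mpr r.2),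
    Nat.mul_div_cancel_left _ (Nat.prime_nth_prime r).pos]

lemma not_dvd_div {k : ℕ} (r : Fin k) :
    ¬ Nat.nth Nat.Prime r ∣
      (∏ s ∈ Finset.range k, Nat.nth Nat.Prime s) / Nat.nth Nat.Prime r := by
  rw [div_eq_prod_erase]
  intro h
  obtain ⟨s, hs, hdvd⟩ :=
    (Nat.prime_nth_prime r).prime.exists_mem_finset_dvd h
  have hsr : s ≠ (r : ℕ) := (Finset.mem_erase.mp hs).1
  have := ((Nat.prime_dvd_prime_iff_eq (Nat.prime_nth_prime r)
    (Nat.prime_nth_prime s)).mp hdvd)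
  exact hsr (Nat.nth_injective Nat.infinite_setOf_prime this.symm)

lemma dvd_div_of_ne {k : ℕ} (r r0 : Fin k) (h : r ≠ r0) :
    Nat.nth Nat.Prime r0 ∣
      (∏ s ∈ Finset.range k, Nat.nth Nat.Prime s) / Nat.nth Nat.Prime r := by
  rw [div_eq_prod_erase]
  exact Finset.dvd_prod_of_mem _ (Finset.mem_erase.mpr
    ⟨fun hh => h (Fin.ext hh).symm, Finset.mem_range.mpr r0.2⟩)

/-- Every integer solution of `A x = b`, where `b = A · 1` is the sum of all columns of
the block matrix `A`, has all `n = km` entries nonzero. -/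
theorem stmt15 {m k : ℕ} (x : Fin m × Fin k → ℤ)
    (hx : (blockA m k).mulVec x = (blockA m k).mulVec (fun _ => 1)) :
    ∀ j, x j ≠ 0 := by
  rintro ⟨i, r0⟩ hj0
  set c : Fin k → ℤ := fun r =>
    (((∏ s ∈ Finset.range k, Nat.nth Nat.Prime s) / Nat.nth Nat.Prime r : ℕ) : ℤ) with hc
  have hrow := congrFun hx i
  simp only [Matrix.mulVec, dotProduct, blockA, Matrix.of_apply, ← hc,
    Fintype.sum_prod_type, ite_mul, zero_mul, mul_one] at hrow
  have h1 : ∀ (g : Fin m → Fin k → ℤ),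
      (∑ y : Fin m, ∑ r : Fin k, if y = i then g y r else 0) = ∑ r : Fin k, g i r := by
    intro g
    rw [Finset.sum_eq_single i (fun b _ hb => by simp [hb]) (by simp)]
    simp
  rw [h1, h1] at hrow
  replace hrow : ∑ r : Fin k, c r * (x (i, r) - 1) = 0 := by
    simp only [mul_sub, Finset.sum_sub_distrib, hrow, mul_one, sub_self]
    exact sub_eq_zero.mpr hrow
  rw [← Finset.add_sum_erase Finset.univ _ (Finset.mem_univ r0), hj0] at hrow
  have hdvd : (Nat.nth Nat.Prime r0 : ℤ) ∣ c r0 := by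
    have h2 : (Nat.nth Nat.Prime r0 : ℤ) ∣
        ∑ r ∈ Finset.univ.erase r0, c r * (x (i, r) - 1) := by
      refine Finset.dvd_sum fun r hr => Dvd.dvd.mul_right ?_ _
      simp only [hc]
      exact_mod_cast dvd_div_of_ne r r0 (Finset.mem_erase.mp hr).1
    have h3 : c r0 = ∑ r ∈ Finset.univ.erase r0, c r * (x (i, r) - 1) := by linarith
    rwa [h3]
  simp only [hc] at hdvd
  exact not_dvd_div r0 (by exact_mod_cast hdvd)
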